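/- On the secondary Hochschild complex (C^•(A,B,ε), b), the identity (1 − λ) ∘ b_n = b'_n ∘ (1 − λ) holds, where b'_n is the truncated differential consisting of the first n+1 terms of b_n (omitting the last, cyclic, term). Consequently, the subspaces C^n_λ(A,B,ε) = Ker(1 − λ) form a subcomplex of (C^•(A,B,ε), b). -/

import Mathlib

open scoped TensorProduct
open MulOpposite PiTensorProduct

noncomputable section

/-- Index set for the strictly upper triangular positions of an `m × m` matrix. -/
abbrev UT (m : ℕ) := {p : Fin m × Fin m // p.1 < p.2}

/-- The tensor space `A^{⊗ m} ⊗ B^{⊗ m(m-1)/2}` in its matrix representation. -/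
def TS (k A B : Type) [Field k] [Ring A] [Algebra k A] [CommRing B] [Algebra k B]
    (m : ℕ) : Type :=
  (⨂[k] _ : Fin m, A) ⊗[k] (⨂[k] _ : UT m, B)

variable (k A B : Type) [Field k] [Ring A] [Algebra k A] [CommRing B] [Algebra k B]

instance (m : ℕ) : AddCommGroup (TS k A B m) :=
  inferInstanceAs (AddCommGroup ((⨂[k] _ : Fin m, A) ⊗[k] (⨂[k] _ : UT m, B)))

instance (m : ℕ) : Module k (TS k A B m) :=
  inferInstanceAs (Module k ((⨂[k] _ : Fin m, A) ⊗[k] (⨂[k] _ : UT m, B)))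

/-- The secondary Hochschild cochain space `C^n(A,B,ε) = Hom_k(A^{⊗(n+1)} ⊗ B^{⊗ n(n+1)/2}, k)`. -/
abbrev Cc (n : ℕ) : Type := TS k A B (n + 1) →ₗ[k] k

/-- The pure tensor (generator) determined by diagonal entries `a` and
upper-triangular entries `β` (read at indices `< m`). -/
def gen (m : ℕ) (a : ℕ → A) (β : ℕ → ℕ → B) : TS k A B m :=
  (tprod k fun i : Fin m => a i) ⊗ₜ[k] (tprod k fun p : UT m => β p.1.1 p.1.2)

/-- Diagonal of the matrix obtained by merging diagonal entries `i`, `i+1` via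
`a_i a_{i+1} ε(b_{i,i+1})`. -/
def mergeA (ε : B →ₐ[k] A) (i : ℕ) (a : ℕ → A) (β : ℕ → ℕ → B) : ℕ → A :=
  fun j => if j < i then a j else if j = i then a i * a (i + 1) * ε (β i (i + 1)) else a (j + 1)

/-- Preimages of the index `p` under the monotone surjection collapsing `i` and `i+1`. -/
def preim (i p : ℕ) : Finset ℕ :=
  if p < i then {p} else if p = i then {i, i + 1} else {p + 1}

/-- `B`-entries of the matrix obtained by merging rows/columns `i` and `i+1`. -/
def mergeB (i : ℕ) (β : ℕ → ℕ → B) : ℕ → ℕ → B :=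
  fun p q => ∏ u ∈ preim i p, ∏ v ∈ preim i q, β u v

/-- Diagonal of the "cyclic merge": `a_m a_0 ε(b_{0,m})` in position `0`
(top index `m`). -/
def cmergeA (ε : B →ₐ[k] A) (m : ℕ) (a : ℕ → A) (β : ℕ → ℕ → B) : ℕ → A :=
  fun j => if j = 0 then a m * a 0 * ε (β 0 m) else a j

/-- `B`-entries of the cyclic merge: first row becomes `b_{q,m} b_{0,q}`. -/
def cmergeB (m : ℕ) (β : ℕ → ℕ → B) : ℕ → ℕ → B :=
  fun p q => if p = 0 then β q m * β 0 q else β p q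

/-- Diagonal of the cyclically rotated matrix: `a_n` moves to position `0`. -/
def rotA (n : ℕ) (a : ℕ → A) : ℕ → A :=
  fun j => if j = 0 then a n else a (j - 1)

/-- `B`-entries of the cyclically rotated matrix: the first row becomes
`b_{0,n}, …, b_{n-1,n}`. -/
def rotB (n : ℕ) (β : ℕ → ℕ → B) : ℕ → ℕ → B :=
  fun p q => if p = 0 then β (q - 1) n else β (p - 1) (q - 1)

lemma TS.hom_ext {m : ℕ} {ψ χ : TS k A B m →ₗ[k] k}
    (h : ∀ (a : ℕ → A) (β : ℕ → ℕ → B), ψ (gen k A B m a β) = χ (gen k A B m a β)) :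
    ψ = χ := by
  apply TensorProduct.ext' (g := ψ) (h := χ)
  intro x y
  induction x using PiTensorProduct.induction_on with
  | smul_tprod r f =>
    induction y using PiTensorProduct.induction_on with
    | smul_tprod s g =>
      have key : ψ ((tprod k f) ⊗ₜ[k] (tprod k g)) = χ ((tprod k f) ⊗ₜ[k] (tprod k g)) := by
        have h2 := h (fun j => if hj : j < m then f ⟨j, hj⟩ else 0)
          (fun u v => if huv : u < v ∧ v < m then
            g ⟨(⟨u, lt_trans huv.1 huv.2⟩, ⟨v, huv.2⟩), huv.1⟩ else 0)
        have hg : gen k A B m (fun j => if hj : j < m then f ⟨j, hj⟩ else 0)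
            (fun u v => if huv : u < v ∧ v < m then
              g ⟨(⟨u, lt_trans huv.1 huv.2⟩, ⟨v, huv.2⟩), huv.1⟩ else 0)
            = (tprod k f) ⊗ₜ[k] (tprod k g) := by
          unfold gen
          congr 1
          · exact congrArg _ (funext fun i => by simp [i.2])
          · refine congrArg _ (funext fun p => ?_)
            have h1 : (p.1.1 : ℕ) < (p.1.2 : ℕ) := p.2
            have h2 : (p.1.2 : ℕ) < m := p.1.2.2
            simp only [dif_pos (And.intro h1 h2)]
        rwa [hg] at h2
      rw [show ((r • tprod k f) ⊗ₜ[k] (s • tprod k g)) = (s * r) • ((tprod k f) ⊗ₜ[k] (tprod k g)) from by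
        rw [TensorProduct.tmul_smul, TensorProduct.smul_tmul', smul_smul,
          TensorProduct.smul_tmul']]
      refine (ψ.map_smul (s * r) _).trans (Eq.trans ?_ (χ.map_smul (s * r) _).symm)
      exact congrArg (fun z : k => (s * r) • z) key
    | add y1 y2 h1 h2 =>
      rw [TensorProduct.tmul_add]
      exact (ψ.map_add _ _).trans ((congrArg₂ (· + ·) h1 h2).trans (χ.map_add _ _).symm)
  | add x1 x2 h1 h2 =>
    rw [TensorProduct.add_tmul]
    exact (ψ.map_add _ _).trans ((congrArg₂ (· + ·) h1 h2).trans (χ.map_add _ _).symm)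

lemma gen_congr {m : ℕ} {a a' : ℕ → A} {β β' : ℕ → ℕ → B}
    (ha : ∀ j < m, a j = a' j) (hβ : ∀ p q, p < q → q < m → β p q = β' p q) :
    gen k A B m a β = gen k A B m a' β' := by
  unfold gen
  congr 1
  · exact congrArg _ (funext fun i => ha i i.2)
  · exact congrArg _ (funext fun p => hβ p.1.1 p.1.2 p.2 p.1.2.2)
lemma preim_succ (i p : ℕ) : preim (i + 1) (p + 1) = (preim i p).image (· + 1) := by
  unfold preim
  by_cases h1 : p < i
  · rw [if_pos h1, if_pos (by omega : p + 1 < i + 1), Finset.image_singleton]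
  · by_cases h2 : p = i
    · subst h2
      rw [if_neg h1, if_pos rfl, if_neg (by omega), if_pos rfl]
      rw [Finset.image_insert, Finset.image_singleton]
    · rw [if_neg h1, if_neg h2, if_neg (by omega : ¬ p + 1 < i + 1),
        if_neg (by omega : ¬ p + 1 = i + 1), Finset.image_singleton]

lemma preim_zero (i : ℕ) : preim (i + 1) 0 = {0} := by
  unfold preim; rw [if_pos (by omega)]

lemma preim_top (i n : ℕ) (h : i < n) : preim i n = {n + 1} := by
  unfold preim; rw [if_neg (by omega), if_neg (by omega)]

lemma I1 (ε : B →ₐ[k] A) (n : ℕ) (a : ℕ → A) (β : ℕ → ℕ → B) :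
    gen k A B (n + 1) (cmergeA k A B ε (n + 1) a β) (cmergeB B (n + 1) β) =
    gen k A B (n + 1) (mergeA k A B ε 0 (rotA A (n + 1) a) (rotB B (n + 1) β))
      (mergeB B 0 (rotB B (n + 1) β)) := by
  apply gen_congr
  · intro j _
    unfold cmergeA mergeA rotA rotB
    rcases Nat.eq_zero_or_pos j with h0 | h0
    · subst h0; simp
    · have hj : j ≠ 0 := by omega
      simp [hj]
  · intro p q hpq hq
    have hq0 : q ≠ 0 := by omega
    obtain ⟨q', rfl⟩ : ∃ q', q = q' + 1 := ⟨q - 1, by omega⟩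
    unfold cmergeB mergeB
    rw [show preim 0 (q' + 1) = {q' + 2} from by unfold preim; rw [if_neg (by omega), if_neg (by omega)]]
    by_cases hp : p = 0
    · subst hp
      rw [show preim 0 0 = {0, 1} from by unfold preim; rw [if_neg (by omega), if_pos rfl],
        Finset.prod_pair (by omega : (0:ℕ) ≠ 1)]
      simp [rotB]
    · obtain ⟨p', rfl⟩ : ∃ p', p = p' + 1 := ⟨p - 1, by omega⟩
      rw [show preim 0 (p' + 1) = {p' + 2} from by unfold preim; rw [if_neg (by omega), if_neg (by omega)]]
      simp [rotB]
lemma I2A (ε : B →ₐ[k] A) (n i : ℕ) (hi : i < n) (a : ℕ → A) (β : ℕ → ℕ → B) :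
    ∀ j < n + 1, mergeA k A B ε (i + 1) (rotA A (n + 1) a) (rotB B (n + 1) β) j
      = rotA A n (mergeA k A B ε i a β) j := by
  intro j hj
  unfold mergeA rotA rotB
  beta_reduce
  split_ifs <;> first | rfl | omega | exact (by assumption : False).elim | (congr 1 <;> first | omega | (congr 1 <;> omega)) | exact absurd trivial (by assumption : False).elim

lemma I2B (n i : ℕ) (hi : i < n) (β : ℕ → ℕ → B) :
    ∀ p q, p < q → q < n + 1 →
      mergeB B (i + 1) (rotB B (n + 1) β) p q = rotB B n (mergeB B i β) p q := by
  intro p q hpq hq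
  obtain ⟨q', rfl⟩ : ∃ q', q = q' + 1 := ⟨q - 1, by omega⟩
  by_cases hp : p = 0
  · subst hp
    rw [show rotB B n (mergeB B i β) 0 (q' + 1) = mergeB B i β q' n from by simp [rotB]]
    unfold mergeB
    rw [preim_zero, Finset.prod_singleton, preim_succ, preim_top i n hi,
      Finset.prod_image (fun x _ y _ h => by omega)]
    refine Finset.prod_congr rfl fun w hw => ?_
    rw [Finset.prod_singleton]
    simp [rotB]
  · obtain ⟨p', rfl⟩ : ∃ p', p = p' + 1 := ⟨p - 1, by omega⟩
    rw [show rotB B n (mergeB B i β) (p' + 1) (q' + 1) = mergeB B i β p' q' from by simp [rotB]]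
    unfold mergeB
    rw [preim_succ, preim_succ, Finset.prod_image (fun x _ y _ h => by omega)]
    refine Finset.prod_congr rfl fun u hu => ?_
    rw [Finset.prod_image (fun x _ y _ h => by omega)]
    refine Finset.prod_congr rfl fun v hv => ?_
    simp [rotB]

lemma I2 (ε : B →ₐ[k] A) (n i : ℕ) (hi : i < n) (a : ℕ → A) (β : ℕ → ℕ → B) :
    gen k A B (n + 1) (mergeA k A B ε (i + 1) (rotA A (n + 1) a) (rotB B (n + 1) β))
      (mergeB B (i + 1) (rotB B (n + 1) β)) =
    gen k A B (n + 1) (rotA A n (mergeA k A B ε i a β)) (rotB B n (mergeB B i β)) :=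
  gen_congr k A B (fun j hj => I2A k A B ε n i hi a β j hj) (I2B B n i hi β)

lemma I3 (ε : B →ₐ[k] A) (n : ℕ) (a : ℕ → A) (β : ℕ → ℕ → B) :
    gen k A B (n + 1) (cmergeA k A B ε (n + 1) (rotA A (n + 1) a) (rotB B (n + 1) β))
      (cmergeB B (n + 1) (rotB B (n + 1) β)) =
    gen k A B (n + 1) (rotA A n (mergeA k A B ε n a β)) (rotB B n (mergeB B n β)) := by
  apply gen_congr
  · intro j hj
    unfold cmergeA mergeA rotA rotB
    beta_reduce
    split_ifs <;>
      first
        | rfl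
        | omega
        | exact (by assumption : False).elim
        | (congr 1 <;> first | omega | (congr 1 <;> omega))
  · intro p q hpq hq
    obtain ⟨q', rfl⟩ : ∃ q', q = q' + 1 := ⟨q - 1, by omega⟩
    by_cases hp : p = 0
    · subst hp
      rw [show rotB B n (mergeB B n β) 0 (q' + 1) = mergeB B n β q' n from by simp [rotB]]
      unfold cmergeB mergeB
      rw [if_pos rfl,
        show preim n q' = {q'} from by unfold preim; rw [if_pos (by omega)],
        Finset.prod_singleton,
        show preim n n = {n, n + 1} from by unfold preim; rw [if_neg (by omega), if_pos rfl],
        Finset.prod_pair (by omega : n ≠ n + 1)]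
      simp [rotB]
    · obtain ⟨p', rfl⟩ : ∃ p', p = p' + 1 := ⟨p - 1, by omega⟩
      rw [show rotB B n (mergeB B n β) (p' + 1) (q' + 1) = mergeB B n β p' q' from by simp [rotB]]
      unfold cmergeB mergeB
      rw [if_neg (by omega : ¬ p' + 1 = 0),
        show preim n p' = {p'} from by unfold preim; rw [if_pos (by omega)],
        show preim n q' = {q'} from by unfold preim; rw [if_pos (by omega)],
        Finset.prod_singleton, Finset.prod_singleton]
      simp [rotB]
lemma key_sum (n : ℕ) (F G : ℕ → k) (C0 : k) :
    ((∑ i ∈ Finset.range (n + 1), (-1 : ℤ) ^ i • F i) + (-1 : ℤ) ^ (n + 1) • C0)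
      - (-1 : ℤ) ^ (n + 1) •
          (((∑ j ∈ Finset.range n, (-1 : ℤ) ^ (j + 1) • G j) + (-1 : ℤ) ^ 0 • C0)
            + (-1 : ℤ) ^ (n + 1) • G n)
    = ∑ i ∈ Finset.range (n + 1), (-1 : ℤ) ^ i • (F i - (-1 : ℤ) ^ n • G i) := by
  simp only [zsmul_eq_mul, Int.cast_pow, Int.cast_neg, Int.cast_one, pow_zero, one_mul]
  have hRHS : (∑ i ∈ Finset.range (n + 1), (-1 : k) ^ i * (F i - (-1 : k) ^ n * G i))
      = (∑ i ∈ Finset.range (n + 1), (-1 : k) ^ i * F i)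
        - ∑ i ∈ Finset.range (n + 1), (-1 : k) ^ i * ((-1 : k) ^ n * G i) := by
    rw [← Finset.sum_sub_distrib]
    exact Finset.sum_congr rfl fun i _ => by ring
  have hV : (∑ i ∈ Finset.range (n + 1), (-1 : k) ^ i * ((-1 : k) ^ n * G i))
      = (∑ j ∈ Finset.range n, (-1 : k) ^ j * ((-1 : k) ^ n * G j))
        + (-1 : k) ^ n * ((-1 : k) ^ n * G n) :=
    Finset.sum_range_succ _ n
  have hU : (∑ j ∈ Finset.range n, (-1 : k) ^ j * ((-1 : k) ^ n * G j))
      = (-1 : k) ^ n * ∑ j ∈ Finset.range n, (-1 : k) ^ j * G j := by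
    rw [Finset.mul_sum]
    exact Finset.sum_congr rfl fun j _ => by ring
  have hT : (∑ j ∈ Finset.range n, (-1 : k) ^ (j + 1) * G j)
      = - ∑ j ∈ Finset.range n, (-1 : k) ^ j * G j := by
    rw [← Finset.sum_neg_distrib]
    exact Finset.sum_congr rfl fun j _ => by rw [pow_succ]; ring
  rw [hRHS, hV, hU, hT, pow_succ]
  ring
/-!
STATEMENT 6: on the secondary Hochschild complex `(C^•(A,B,ε), b)` one has
`(1 − λ) ∘ b_n = b'_n ∘ (1 − λ)`, where `b'_n` consists of the first `n+1` terms
of `b_n`; consequently `C^n_λ(A,B,ε) = Ker(1 − λ)` is a subcomplex.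
-/

theorem secondary_cyclic_subcomplex
    (ε : B →ₐ[k] A) (hcent : ∀ (b : B) (a : A), ε b * a = a * ε b)
    (lam : ∀ n : ℕ, Module.End k (Cc k A B n))
    (hlam : ∀ (n : ℕ) (φ : Cc k A B n) (a : ℕ → A) (β : ℕ → ℕ → B),
      lam n φ (gen k A B (n + 1) a β) =
        (-1 : ℤ) ^ n • φ (gen k A B (n + 1) (rotA A n a) (rotB B n β)))
    (b : ∀ n : ℕ, Cc k A B n →ₗ[k] Cc k A B (n + 1))
    (hb : ∀ (n : ℕ) (φ : Cc k A B n) (a : ℕ → A) (β : ℕ → ℕ → B),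
      b n φ (gen k A B (n + 2) a β) =
        (∑ i ∈ Finset.range (n + 1), (-1 : ℤ) ^ i •
            φ (gen k A B (n + 1) (mergeA k A B ε i a β) (mergeB B i β)))
        + (-1 : ℤ) ^ (n + 1) •
            φ (gen k A B (n + 1) (cmergeA k A B ε (n + 1) a β) (cmergeB B (n + 1) β)))
    (btr : ∀ n : ℕ, Cc k A B n →ₗ[k] Cc k A B (n + 1))
    (hbtr : ∀ (n : ℕ) (φ : Cc k A B n) (a : ℕ → A) (β : ℕ → ℕ → B),
      btr n φ (gen k A B (n + 2) a β) =
        ∑ i ∈ Finset.range (n + 1), (-1 : ℤ) ^ i •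
            φ (gen k A B (n + 1) (mergeA k A B ε i a β) (mergeB B i β))) :
    (∀ (n : ℕ) (φ : Cc k A B n),
        b n φ - lam (n + 1) (b n φ) = btr n (φ - lam n φ)) ∧
    (∀ (n : ℕ) (φ : Cc k A B n), lam n φ = φ → lam (n + 1) (b n φ) = b n φ) := by

  have main : ∀ (n : ℕ) (φ : Cc k A B n),
      b n φ - lam (n + 1) (b n φ) = btr n (φ - lam n φ) := by
    intro n φ
    apply TS.hom_ext k A B (m := n + 2)
    intro a β
    rw [LinearMap.sub_apply, hbtr n (φ - lam n φ) a β]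
    have hrhs : (∑ i ∈ Finset.range (n + 1), (-1 : ℤ) ^ i •
          (φ - lam n φ) (gen k A B (n + 1) (mergeA k A B ε i a β) (mergeB B i β)))
        = ∑ i ∈ Finset.range (n + 1), (-1 : ℤ) ^ i •
          (φ (gen k A B (n + 1) (mergeA k A B ε i a β) (mergeB B i β))
            - (-1 : ℤ) ^ n • φ (gen k A B (n + 1)
                (rotA A n (mergeA k A B ε i a β)) (rotB B n (mergeB B i β)))) :=
      Finset.sum_congr rfl fun i _ => by
        rw [LinearMap.sub_apply, hlam n φ (mergeA k A B ε i a β) (mergeB B i β)]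
    have hsum : (∑ j ∈ Finset.range n, (-1 : ℤ) ^ (j + 1) •
          φ (gen k A B (n + 1)
            (mergeA k A B ε (j + 1) (rotA A (n + 1) a) (rotB B (n + 1) β))
            (mergeB B (j + 1) (rotB B (n + 1) β))))
        = ∑ j ∈ Finset.range n, (-1 : ℤ) ^ (j + 1) •
          φ (gen k A B (n + 1)
            (rotA A n (mergeA k A B ε j a β)) (rotB B n (mergeB B j β))) :=
      Finset.sum_congr rfl fun j hj => by
        rw [I2 k A B ε n j (Finset.mem_range.mp hj) a β]
    rw [hrhs, hb n φ a β, hlam (n + 1) (b n φ) a β,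
      hb n φ (rotA A (n + 1) a) (rotB B (n + 1) β),
      Finset.sum_range_succ' (fun i => (-1 : ℤ) ^ i •
        φ (gen k A B (n + 1)
          (mergeA k A B ε i (rotA A (n + 1) a) (rotB B (n + 1) β))
          (mergeB B i (rotB B (n + 1) β)))) n,
      ← I1 k A B ε n a β, I3 k A B ε n a β, hsum]
    exact key_sum k n
      (fun i => φ (gen k A B (n + 1) (mergeA k A B ε i a β) (mergeB B i β)))
      (fun i => φ (gen k A B (n + 1) (rotA A n (mergeA k A B ε i a β))
        (rotB B n (mergeB B i β))))
      (φ (gen k A B (n + 1) (cmergeA k A B ε (n + 1) a β) (cmergeB B (n + 1) β)))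
  refine ⟨main, fun n φ h => ?_⟩
  have h2 := main n φ
  rw [h, sub_self, map_zero] at h2
  exact (sub_eq_zero.mp h2).symm
end
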